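/- The number of lattice paths of length n from (0,0) to (i,j) using unit steps north, east, south, west equals C(n, r) * C(n, s), where r = (n - i - j)/2 and s = (n + i - j)/2, provided n ≡ i + j (mod 2). -/

import Mathlib

/-- Binomial coefficient with an integer lower index, interpreted as `0` when the
lower index is negative. -/
def zchoose (n : ℕ) (m : ℤ) : ℕ :=
  if 0 ≤ m then Nat.choose n m.toNat else 0

/-- A four-step lattice path, recorded by its list of steps, each one of
`N = (0,1)`, `E = (1,0)`, `S = (0,-1)`, `W = (-1,0)`. -/
def IsFourStepPath (p : List (ℤ × ℤ)) : Prop :=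
  ∀ s ∈ p, s = (0, 1) ∨ s = (1, 0) ∨ s = (0, -1) ∨ s = (-1, 0)

lemma zchoose_pascal (n : ℕ) (m : ℤ) :
    zchoose (n + 1) m = zchoose n m + zchoose n (m - 1) := by
  unfold zchoose
  rcases lt_trichotomy m 0 with h | h | h
  · rw [if_neg (by omega), if_neg (by omega), if_neg (by omega)]
  · subst h; simp
  · rw [if_pos (by omega), if_pos (by omega), if_pos (by omega)]
    have h1 : m.toNat = (m - 1).toNat + 1 := by omega
    rw [h1, Nat.choose_succ_succ]
    ring

def pathsF : ℕ → Finset (List (ℤ × ℤ))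
  | 0 => {[]}
  | n + 1 =>
      ((pathsF n).image ((0, 1) :: ·)) ∪ ((pathsF n).image ((1, 0) :: ·)) ∪
        ((pathsF n).image ((0, -1) :: ·)) ∪ ((pathsF n).image ((-1, 0) :: ·))

lemma mem_pathsF (n : ℕ) (p : List (ℤ × ℤ)) :
    p ∈ pathsF n ↔ p.length = n ∧ IsFourStepPath p := by
  induction n generalizing p with
  | zero =>
    simp only [pathsF, Finset.mem_singleton]
    constructor
    · rintro rfl; exact ⟨rfl, fun s hs => by simp at hs⟩
    · rintro ⟨hl, _⟩; exact List.length_eq_zero_iff.mp hl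
  | succ n ih =>
    simp only [pathsF, Finset.mem_union, Finset.mem_image]
    constructor
    · rintro (((⟨q, hq, rfl⟩ | ⟨q, hq, rfl⟩) | ⟨q, hq, rfl⟩) | ⟨q, hq, rfl⟩) <;>
        obtain ⟨hlen, hpath⟩ := (ih q).mp hq <;>
        refine ⟨by simp [hlen], ?_⟩ <;>
        · intro s hs
          rcases List.mem_cons.mp hs with rfl | hs
          · simp
          · exact hpath s hs
    · rintro ⟨hlen, hpath⟩
      cases p with
      | nil => simp at hlen
      | cons a q =>
        have hq : q ∈ pathsF n := (ih q).mpr ⟨by simpa using hlen,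
          fun s hs => hpath s (List.mem_cons_of_mem _ hs)⟩
        rcases hpath a List.mem_cons_self with rfl | rfl | rfl | rfl
        · exact Or.inl (Or.inl (Or.inl ⟨q, hq, rfl⟩))
        · exact Or.inl (Or.inl (Or.inr ⟨q, hq, rfl⟩))
        · exact Or.inl (Or.inr ⟨q, hq, rfl⟩)
        · exact Or.inr ⟨q, hq, rfl⟩

def cnt (n : ℕ) (t : ℤ × ℤ) : ℕ := ((pathsF n).filter (fun p => p.sum = t)).card

lemma cnt_zero (t : ℤ × ℤ) : cnt 0 t = if t = (0, 0) then 1 else 0 := by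
  unfold cnt pathsF
  split <;> rename_i h
  · subst h; rw [Finset.filter_singleton]; simp [show (0 : ℤ × ℤ) = (0, 0) from rfl]
  · rw [Finset.card_eq_zero, Finset.filter_eq_empty_iff]
    intro p hp
    simp only [Finset.mem_singleton] at hp
    subst hp
    intro hh
    exact h (by rw [← hh]; rfl)

lemma cnt_succ (n : ℕ) (t : ℤ × ℤ) :
    cnt (n + 1) t = cnt n (t - (0, 1)) + cnt n (t - (1, 0)) +
      cnt n (t - (0, -1)) + cnt n (t - (-1, 0)) := by
  unfold cnt
  have hsumiff : ∀ (s : ℤ × ℤ) (q : List (ℤ × ℤ)), (s :: q).sum = t ↔ q.sum = t - s := by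
    intro s q
    rw [List.sum_cons]
    constructor
    · intro h; rw [← h]; abel
    · intro h; rw [h]; abel
  have key : ∀ s : ℤ × ℤ, ((pathsF n).image (s :: ·)).filter (fun p => p.sum = t) =
      ((pathsF n).filter (fun p => p.sum = t - s)).image (s :: ·) := by
    intro s
    ext p
    simp only [Finset.mem_filter, Finset.mem_image]
    constructor
    · rintro ⟨⟨q, hq, rfl⟩, hsum⟩
      exact ⟨q, ⟨hq, (hsumiff s q).mp hsum⟩, rfl⟩
    · rintro ⟨q, ⟨hq, hsum⟩, rfl⟩
      exact ⟨⟨q, hq, rfl⟩, (hsumiff s q).mpr hsum⟩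
  have hinj : ∀ s : ℤ × ℤ, Function.Injective (s :: · : List (ℤ × ℤ) → _) := by
    intro s x y h; simpa using h
  have hdisj : ∀ (a b : ℤ × ℤ) (S T : Finset (List (ℤ × ℤ))), a ≠ b →
      Disjoint (S.image (a :: ·)) (T.image (b :: ·)) := by
    intro a b S T hab
    rw [Finset.disjoint_left]
    rintro p hp hq
    simp only [Finset.mem_image] at hp hq
    obtain ⟨x, _, rfl⟩ := hp
    obtain ⟨y, _, h⟩ := hq
    injection h with h1 _
    exact hab h1.symm
  rw [pathsF]
  rw [Finset.filter_union, Finset.filter_union, Finset.filter_union]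
  rw [key, key, key, key]
  rw [Finset.card_union_of_disjoint, Finset.card_union_of_disjoint, Finset.card_union_of_disjoint]
  · rw [Finset.card_image_of_injective _ (hinj _), Finset.card_image_of_injective _ (hinj _),
      Finset.card_image_of_injective _ (hinj _), Finset.card_image_of_injective _ (hinj _)]
  · exact hdisj _ _ _ _ (by decide)
  · exact Finset.disjoint_union_left.mpr ⟨hdisj _ _ _ _ (by decide), hdisj _ _ _ _ (by decide)⟩
  · exact Finset.disjoint_union_left.mpr ⟨Finset.disjoint_union_left.mpr
      ⟨hdisj _ _ _ _ (by decide), hdisj _ _ _ _ (by decide)⟩, hdisj _ _ _ _ (by decide)⟩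

lemma zchoose_zero (m : ℤ) : zchoose 0 m = if m = 0 then 1 else 0 := by
  unfold zchoose
  by_cases h : m = 0
  · subst h; simp
  · rw [if_neg h]
    split_ifs with h2
    · exact Nat.choose_eq_zero_of_lt (by omega)
    · rfl

lemma cnt_formula : ∀ (n : ℕ) (i j : ℤ), (n : ℤ) % 2 = (i + j) % 2 →
    cnt n (i, j) = zchoose n (((n : ℤ) - i - j) / 2) * zchoose n (((n : ℤ) + i - j) / 2) := by
  intro n
  induction n with
  | zero =>
    intro i j hpar
    rw [cnt_zero, zchoose_zero, zchoose_zero]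
    simp only [Prod.mk.injEq, Nat.cast_zero]
    split_ifs <;> omega
  | succ n ih =>
    intro i j hpar
    rw [cnt_succ]
    have e1 : (i, j) - ((0 : ℤ), (1 : ℤ)) = (i, j - 1) := by simp [Prod.ext_iff]
    have e2 : (i, j) - ((1 : ℤ), (0 : ℤ)) = (i - 1, j) := by simp [Prod.ext_iff]
    have e3 : (i, j) - ((0 : ℤ), (-1 : ℤ)) = (i, j + 1) := by simp [Prod.ext_iff]
    have e4 : (i, j) - ((-1 : ℤ), (0 : ℤ)) = (i + 1, j) := by simp [Prod.ext_iff]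
    rw [e1, e2, e3, e4]
    have hc : ((n : ℤ) + 1) = ((n + 1 : ℕ) : ℤ) := by push_cast; ring
    rw [ih i (j - 1) (by omega), ih (i - 1) j (by omega), ih i (j + 1) (by omega),
      ih (i + 1) j (by omega)]
    set R : ℤ := (((n + 1 : ℕ) : ℤ) - i - j) / 2 with hR
    set S : ℤ := (((n + 1 : ℕ) : ℤ) + i - j) / 2 with hS
    have q1 : ((n : ℤ) - i - (j - 1)) / 2 = R := by rw [hR]; push_cast; omega
    have q1' : ((n : ℤ) + i - (j - 1)) / 2 = S := by rw [hS]; push_cast; omega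
    have q2 : ((n : ℤ) - (i - 1) - j) / 2 = R := by rw [hR]; push_cast; omega
    have q2' : ((n : ℤ) + (i - 1) - j) / 2 = S - 1 := by rw [hS]; push_cast; omega
    have q3 : ((n : ℤ) - i - (j + 1)) / 2 = R - 1 := by rw [hR]; push_cast; omega
    have q3' : ((n : ℤ) + i - (j + 1)) / 2 = S - 1 := by rw [hS]; push_cast; omega
    have q4 : ((n : ℤ) - (i + 1) - j) / 2 = R - 1 := by rw [hR]; push_cast; omega
    have q4' : ((n : ℤ) + (i + 1) - j) / 2 = S := by rw [hS]; push_cast; omega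
    rw [q1, q1', q2, q2', q3, q3', q4, q4', zchoose_pascal n R, zchoose_pascal n S]
    ring

/-- The number of four-step lattice paths of length `n` from the origin to `(i,j)`
is `C(n,r) * C(n,s)` where `r = (n-i-j)/2` and `s = (n+i-j)/2`, provided
`n ≡ i + j (mod 2)`. -/
theorem four_step_count (n : ℕ) (i j : ℤ) (hpar : ((n : ℤ)) % 2 = (i + j) % 2) :
    Nat.card {p : List (ℤ × ℤ) // p.length = n ∧ IsFourStepPath p ∧ p.sum = (i, j)} =
      zchoose n (((n : ℤ) - i - j) / 2) * zchoose n (((n : ℤ) + i - j) / 2) := by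
  have hequiv : {p : List (ℤ × ℤ) // p.length = n ∧ IsFourStepPath p ∧ p.sum = (i, j)} ≃
      {p : List (ℤ × ℤ) // p ∈ (pathsF n).filter (fun p => p.sum = (i, j))} := by
    apply Equiv.subtypeEquivRight
    intro p
    simp only [Finset.mem_filter, mem_pathsF]
    tauto
  rw [Nat.card_congr hequiv, Nat.card_eq_finsetCard]
  exact cnt_formula n i j hpar
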